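/- Let â be a kernel atom of S, and let φ be a formula consistent with S whose truth value does not depend on atom a (i.e., φ is invariant under flipping a). Then â is a kernel atom of S' = S ∪ {φ}. -/

import Mathlib

theorem stmt_14 {Base : Type*} [Fintype Base] [DecidableEq Base]
    (MODS : Finset (Base → Bool)) (φm : Finset (Base → Bool))
    (a : Base) (v : Bool)
    (htyp : (MODS.filter (fun m => m a ≠ v)).card ≤ (MODS.filter (fun m => m a = v)).card)
    (hker : ∀ m ∈ MODS, m a ≠ v → Function.update m a v ∈ MODS)
    (hφcons : ∃ m ∈ MODS, m ∈ φm)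
    (hφindep : ∀ m : Base → Bool, m ∈ φm ↔ Function.update m a (! m a) ∈ φm) :
    (∀ m ∈ MODS ∩ φm, m a ≠ v → Function.update m a v ∈ MODS ∩ φm) ∧
    ((MODS ∩ φm).filter (fun m => m a ≠ v)).card ≤
      ((MODS ∩ φm).filter (fun m => m a = v)).card := by
  have key : ∀ m ∈ MODS ∩ φm, m a ≠ v → Function.update m a v ∈ MODS ∩ φm := by
    intro m hm hne
    rw [Finset.mem_inter] at hm ⊢
    have hba : (! m a) = v := by revert hne; cases m a <;> cases v <;> simp
    refine ⟨hker m hm.1 hne, ?_⟩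
    have := (hφindep m).1 hm.2
    rwa [hba] at this
  refine ⟨key, ?_⟩
  apply Finset.card_le_card_of_injOn (fun m => Function.update m a v)
  · intro m hm
    rw [Finset.mem_coe, Finset.mem_filter] at hm ⊢
    exact ⟨key m hm.1 hm.2, by simp⟩
  · intro m hm m' hm' heq
    rw [Finset.coe_filter, Set.mem_setOf_eq] at hm hm'
    have hma : m a = !v := by
      have := hm.2; revert this; cases m a <;> cases v <;> simp
    have hma' : m' a = !v := by
      have := hm'.2; revert this; cases m' a <;> cases v <;> simp
    funext x
    by_cases hx : x = a
    · rw [hx, hma, hma']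
    · have := congrFun heq x
      simpa [Function.update, hx] using this
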